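/- In the Gaussian thresholding model with π = 1/2, the limit of the attenuation function γ as β₁ᵍ → ∞ equals 1/(1 + Φ(β₀ᵍ − c)) < 1, and the limit as β₁ᵍ → −∞ equals −1/(1 + Φ(c − β₀ᵍ)) > −1. -/

import Mathlib

open MeasureTheory ProbabilityTheory Filter

/-- Standard normal CDF. -/
noncomputable def Phi (x : ℝ) : ℝ := ((gaussianReal 0 1) (Set.Iic x)).toReal

/-- Attenuation function `γ(β₁ᵍ, π, c, β₀ᵍ) = π(ω − E)/(E(1 − E))` with
`E = ζ(1−π) + ωπ`, `ω = Φ(β₁ᵍ + β₀ᵍ − c)`, `ζ = Φ(β₀ᵍ − c)`. -/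
noncomputable def gammaFn (b1 p c b0 : ℝ) : ℝ :=
  p * (Phi (b1 + b0 - c) - (Phi (b0 - c) * (1 - p) + Phi (b1 + b0 - c) * p)) /
    ((Phi (b0 - c) * (1 - p) + Phi (b1 + b0 - c) * p) *
      (1 - (Phi (b0 - c) * (1 - p) + Phi (b1 + b0 - c) * p)))

lemma phi_eq_cdf (x : ℝ) : Phi x = cdf (gaussianReal 0 1) x :=
  (cdf_eq_real _ x).symm

lemma phi_pos (x : ℝ) : 0 < Phi x := by
  have hne : (gaussianReal 0 1) (Set.Iic x) ≠ 0 := by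
    intro h
    have := (gaussianReal_absolutelyContinuous' 0 (by norm_num : (1 : NNReal) ≠ 0)) h
    simp [Real.volume_Iic] at this
  have hfin : (gaussianReal 0 1) (Set.Iic x) ≠ ⊤ := measure_ne_top _ _
  rw [Phi]
  exact ENNReal.toReal_pos hne hfin

lemma phi_lt_one (x : ℝ) : Phi x < 1 := by
  have hne : (gaussianReal 0 1) (Set.Ioi x) ≠ 0 := by
    intro h
    have := (gaussianReal_absolutelyContinuous' 0 (by norm_num : (1 : NNReal) ≠ 0)) h
    simp [Real.volume_Ioi] at this
  have hlt : (gaussianReal 0 1) (Set.Iic x) < 1 := by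
    have hsum := measure_add_measure_compl (μ := gaussianReal 0 1) (measurableSet_Iic (a := x))
    rw [Set.compl_Iic, measure_univ] at hsum
    calc (gaussianReal 0 1) (Set.Iic x)
        < (gaussianReal 0 1) (Set.Iic x) + (gaussianReal 0 1) (Set.Ioi x) :=
          ENNReal.lt_add_right (measure_ne_top _ _) hne
      _ = 1 := hsum
  rw [Phi]
  rw [show (1 : ℝ) = (1 : ENNReal).toReal by simp]
  exact ENNReal.toReal_lt_toReal (measure_ne_top _ _) (by norm_num) |>.mpr hlt

lemma phi_neg (x : ℝ) : Phi (-x) = 1 - Phi x := by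
  have hmap := gaussianReal_map_const_mul (μ := 0) (v := 1) (-1)
  have hv : (NNReal.mk ((-1 : ℝ)^2) (sq_nonneg _) * 1 : NNReal) = 1 := by
    rw [mul_one]; exact NNReal.eq (by norm_num)
  rw [hv] at hmap
  simp only [mul_zero] at hmap
  have h1 : (gaussianReal 0 1) (Set.Iic (-x)) = (gaussianReal 0 1) (Set.Ici x) := by
    conv_lhs => rw [← hmap]
    rw [Measure.map_apply (by fun_prop) measurableSet_Iic]
    congr 1
    ext y
    simp only [Set.mem_preimage, Set.mem_Iic, Set.mem_Ici]
    constructor <;> intro h <;> linarith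
  have hsing : (gaussianReal 0 1) {x} = 0 := by
    apply gaussianReal_absolutelyContinuous 0 (by norm_num : (1 : NNReal) ≠ 0)
    simp
  have h2 : (gaussianReal 0 1) (Set.Ici x) = (gaussianReal 0 1) (Set.Ioi x) := by
    refine le_antisymm ?_ (measure_mono Set.Ioi_subset_Ici_self)
    calc (gaussianReal 0 1) (Set.Ici x) ≤ (gaussianReal 0 1) (Set.Ioi x ∪ {x}) := by
          refine measure_mono fun y hy => ?_
          rcases lt_or_eq_of_le (Set.mem_Ici.mp hy) with h | h
          · exact Or.inl h
          · exact Or.inr h.symm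
      _ ≤ (gaussianReal 0 1) (Set.Ioi x) + (gaussianReal 0 1) {x} := measure_union_le _ _
      _ = (gaussianReal 0 1) (Set.Ioi x) := by rw [hsing, add_zero]
  have h3 : (gaussianReal 0 1) (Set.Ioi x) = 1 - (gaussianReal 0 1) (Set.Iic x) := by
    rw [← Set.compl_Iic, measure_compl measurableSet_Iic (measure_ne_top _ _), measure_univ]
  rw [Phi, Phi, h1, h2, h3, ENNReal.toReal_sub_of_le prob_le_one (by norm_num)]
  simp

/-- For π = 1/2, γ(β₁ᵍ, 1/2, c, β₀ᵍ) → 1/(1 + Φ(β₀ᵍ − c)) < 1 as β₁ᵍ → ∞, and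
γ → −1/(1 + Φ(c − β₀ᵍ)) > −1 as β₁ᵍ → −∞. -/
theorem stmt_18 (c b0 : ℝ) :
    (Tendsto (fun b1 => gammaFn b1 (1/2) c b0) atTop (nhds (1 / (1 + Phi (b0 - c)))) ∧
      1 / (1 + Phi (b0 - c)) < 1) ∧
    (Tendsto (fun b1 => gammaFn b1 (1/2) c b0) atBot (nhds (-1 / (1 + Phi (c - b0)))) ∧
      -1 < -1 / (1 + Phi (c - b0))) := by
  set z := Phi (b0 - c) with hz
  have hz0 : 0 < z := phi_pos _
  have hz1 : z < 1 := phi_lt_one _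
  have hsym : Phi (c - b0) = 1 - z := by
    rw [show c - b0 = -(b0 - c) by ring, phi_neg]
  set G : ℝ → ℝ := fun w => (1/2) * (w - (z * (1 - 1/2) + w * (1/2))) /
    ((z * (1 - 1/2) + w * (1/2)) * (1 - (z * (1 - 1/2) + w * (1/2)))) with hG
  have hcomp : (fun b1 => gammaFn b1 (1/2) c b0) = fun b1 => G (Phi (b1 + b0 - c)) := rfl
  have harg_top : Tendsto (fun b1 : ℝ => b1 + b0 - c) atTop atTop := by
    have : (fun b1 : ℝ => b1 + b0 - c) = fun b1 : ℝ => b1 + (b0 - c) := by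
      funext b1; ring
    rw [this]
    exact tendsto_atTop_add_const_right atTop (b0 - c) tendsto_id
  have harg_bot : Tendsto (fun b1 : ℝ => b1 + b0 - c) atBot atBot := by
    have : (fun b1 : ℝ => b1 + b0 - c) = fun b1 : ℝ => b1 + (b0 - c) := by
      funext b1; ring
    rw [this]
    exact tendsto_atBot_add_const_right atBot (b0 - c) tendsto_id
  have hPhi_eq : (fun x : ℝ => Phi x) = cdf (gaussianReal 0 1) := funext phi_eq_cdf
  have hPhiTop : Tendsto (fun b1 : ℝ => Phi (b1 + b0 - c)) atTop (nhds 1) := by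
    have := (tendsto_cdf_atTop (gaussianReal 0 1)).comp harg_top
    simpa [hPhi_eq, Function.comp_def] using this
  have hPhiBot : Tendsto (fun b1 : ℝ => Phi (b1 + b0 - c)) atBot (nhds 0) := by
    have := (tendsto_cdf_atBot (gaussianReal 0 1)).comp harg_bot
    simpa [hPhi_eq, Function.comp_def] using this
  have hcont : ∀ w : ℝ,
      (z * (1 - 1/2) + w * (1/2)) * (1 - (z * (1 - 1/2) + w * (1/2))) ≠ 0 →
      ContinuousAt G w := by
    intro w hw
    exact ContinuousAt.div (by fun_prop) (by fun_prop) hw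
  have hden1 : (z * (1 - 1/2) + (1:ℝ) * (1/2)) * (1 - (z * (1 - 1/2) + (1:ℝ) * (1/2))) ≠ 0 := by
    have h1 : (0:ℝ) < z * (1 - 1/2) + 1 * (1/2) := by nlinarith
    have h2 : (0:ℝ) < 1 - (z * (1 - 1/2) + 1 * (1/2)) := by nlinarith
    positivity
  have hden0 : (z * (1 - 1/2) + (0:ℝ) * (1/2)) * (1 - (z * (1 - 1/2) + (0:ℝ) * (1/2))) ≠ 0 := by
    have h1 : (0:ℝ) < z * (1 - 1/2) + 0 * (1/2) := by nlinarith
    have h2 : (0:ℝ) < 1 - (z * (1 - 1/2) + 0 * (1/2)) := by nlinarith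
    positivity
  have hG1 : G 1 = 1 / (1 + z) := by
    simp only [hG]
    rw [div_eq_div_iff hden1 (by linarith : (1:ℝ) + z ≠ 0)]
    ring
  have hG0 : G 0 = -1 / (1 + Phi (c - b0)) := by
    simp only [hG, hsym]
    rw [div_eq_div_iff hden0 (by linarith : (1:ℝ) + (1 - z) ≠ 0)]
    ring
  refine ⟨⟨?_, ?_⟩, ⟨?_, ?_⟩⟩
  · rw [hcomp, ← hG1]
    exact ((hcont 1 hden1).tendsto).comp hPhiTop
  · rw [div_lt_one (by linarith)]
    linarith
  · rw [hcomp, ← hG0]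
    exact ((hcont 0 hden0).tendsto).comp hPhiBot
  · rw [hsym, neg_div, neg_lt_neg_iff, div_lt_one (by linarith)]
    linarith
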